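/- Let n ≥ 1, let a_1 < a_2 < … < a_n be real numbers, and let t_1, …, t_n be real numbers satisfying t_1 < a_1 and a_i ≤ t_{i+1} < a_{i+1} for all 1 ≤ i ≤ n−1. Then the n vectors u_i ∈ ℝ^n defined by (u_i)_j = max(0, a_i − t_j) for i, j = 1, …, n are linearly independent. -/

import Mathlib

theorem stmt_5 (n : ℕ) (hn : 1 ≤ n) (a t : Fin n → ℝ)
    (ha : StrictMono a)
    (h0 : t ⟨0, hn⟩ < a ⟨0, hn⟩)
    (ht : ∀ i : Fin n, ∀ h : (i : ℕ) + 1 < n,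
      a i ≤ t ⟨(i : ℕ) + 1, h⟩ ∧ t ⟨(i : ℕ) + 1, h⟩ < a ⟨(i : ℕ) + 1, h⟩) :
    LinearIndependent ℝ (fun (i : Fin n) (j : Fin n) => max 0 (a i - t j)) := by
  -- t j < a j for all j
  have hdiag : ∀ j : Fin n, t j < a j := by
    intro j
    rcases j with ⟨j, hj⟩
    cases j with
    | zero => exact h0
    | succ k =>
      exact (ht ⟨k, Nat.lt_of_succ_lt hj⟩ hj).2
  -- a i ≤ t j when i < j
  have hzero : ∀ i j : Fin n, i < j → a i ≤ t j := by
    intro i j hij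
    rcases j with ⟨j, hj⟩
    cases j with
    | zero => exact absurd hij (by simp [Fin.lt_def])
    | succ k =>
      have hk : k < n := Nat.lt_of_succ_lt hj
      have h1 : a i ≤ a ⟨k, hk⟩ := ha.monotone (by
        simp only [Fin.le_def]
        exact Nat.lt_succ_iff.mp hij)
      exact h1.trans (ht ⟨k, hk⟩ hj).1
  set M : Matrix (Fin n) (Fin n) ℝ := fun i j => max 0 (a i - t j) with hM
  have htri : M.transpose.BlockTriangular id := by
    intro i j hij
    simp only [Matrix.transpose_apply, hM]
    exact max_eq_left (by linarith [hzero j i hij])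
  have hdet : M.det ≠ 0 := by
    rw [← Matrix.det_transpose, Matrix.det_of_upperTriangular htri]
    apply Finset.prod_ne_zero_iff.2
    intro i _
    have := hdiag i
    simp only [Matrix.transpose_apply, hM]
    have : max 0 (a i - t i) = a i - t i := max_eq_right (by linarith)
    show max 0 (a i - t i) ≠ 0
    rw [this]
    linarith [hdiag i]
  exact Matrix.linearIndependent_rows_iff_isUnit.2 (Matrix.isUnit_iff_isUnit_det M |>.2 (isUnit_iff_ne_zero.2 hdet))
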